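/- For homogeneous quadratic polynomials in (x,t) with x ∈ ℝ^(4n) of parabolic degree 1 and t ∈ ℝ³ of parabolic degree 2 (so parabolic degree 2 polynomials are spanned by {x^α x^β} and {t^i}), the operator L₂ = |x|² 𝓛₀ + t^i T_i − 2, where 𝓛₀ = −Σ_α X_α X_α and T_i = 2∂_{t^i}, has kernel exactly the span of t¹, t², t³, and is invertible on the subspace of quadratic polynomials in x alone. -/

import Mathlib

/-- The Levi-Civita symbol on three indices (0-indexed: `eps 0 1 2 = 1`). -/
noncomputable def eps (i j k : Fin 3) : ℝ :=
  (((j : ℝ) - (i : ℝ)) * ((k : ℝ) - (j : ℝ)) * ((k : ℝ) - (i : ℝ))) / 2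

noncomputable def P1 (n : ℕ) (α : Fin (4*n)) : ((Fin (4*n) → ℝ) × (Fin 3 → ℝ)) →L[ℝ] ℝ :=
  (ContinuousLinearMap.proj α).comp (ContinuousLinearMap.fst ℝ (Fin (4*n) → ℝ) (Fin 3 → ℝ))

noncomputable def P2 (n : ℕ) (i : Fin 3) : ((Fin (4*n) → ℝ) × (Fin 3 → ℝ)) →L[ℝ] ℝ :=
  (ContinuousLinearMap.proj i).comp (ContinuousLinearMap.snd ℝ (Fin (4*n) → ℝ) (Fin 3 → ℝ))

lemma P1_hasFDerivAt (n : ℕ) (α : Fin (4*n)) (p : (Fin (4*n) → ℝ) × (Fin 3 → ℝ)) :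
    HasFDerivAt (fun q : (Fin (4*n) → ℝ) × (Fin 3 → ℝ) => q.1 α) (P1 n α) p :=
  (P1 n α).hasFDerivAt

lemma P2_hasFDerivAt (n : ℕ) (i : Fin 3) (p : (Fin (4*n) → ℝ) × (Fin 3 → ℝ)) :
    HasFDerivAt (fun q : (Fin (4*n) → ℝ) × (Fin 3 → ℝ) => q.2 i) (P2 n i) p :=
  (P2 n i).hasFDerivAt

@[simp] lemma P1_apply (n : ℕ) (α : Fin (4*n)) (u : (Fin (4*n) → ℝ) × (Fin 3 → ℝ)) :
    P1 n α u = u.1 α := rfl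

@[simp] lemma P2_apply (n : ℕ) (i : Fin 3) (u : (Fin (4*n) → ℝ) × (Fin 3 → ℝ)) :
    P2 n i u = u.2 i := rfl

lemma hasFDerivAt_poly (n : ℕ) (c : Fin (4*n) → Fin (4*n) → ℝ) (d : Fin 3 → ℝ)
    (p : (Fin (4*n) → ℝ) × (Fin 3 → ℝ)) :
    HasFDerivAt (fun q : (Fin (4*n) → ℝ) × (Fin 3 → ℝ) =>
      (∑ α, ∑ β, c α β * q.1 α * q.1 β) + ∑ i, d i * q.2 i)
      ((∑ α, ∑ β, ((c α β * p.1 α) • P1 n β + p.1 β • (c α β • P1 n α))) +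
        ∑ i, d i • P2 n i) p := by
  apply HasFDerivAt.add
  · apply HasFDerivAt.fun_sum; intro α _
    apply HasFDerivAt.fun_sum; intro β _
    exact ((P1_hasFDerivAt n α p).const_mul (c α β)).mul (P1_hasFDerivAt n β p)
  · apply HasFDerivAt.fun_sum; intro i _
    exact (P2_hasFDerivAt n i p).const_mul (d i)

lemma fderiv_poly_apply (n : ℕ) (c : Fin (4*n) → Fin (4*n) → ℝ) (d : Fin 3 → ℝ)
    (p u : (Fin (4*n) → ℝ) × (Fin 3 → ℝ)) :
    fderiv ℝ (fun q : (Fin (4*n) → ℝ) × (Fin 3 → ℝ) =>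
      (∑ α, ∑ β, c α β * q.1 α * q.1 β) + ∑ i, d i * q.2 i) p u
    = (∑ α, ∑ β, c α β * (u.1 α * p.1 β + p.1 α * u.1 β)) + ∑ i, d i * u.2 i := by
  rw [(hasFDerivAt_poly n c d p).fderiv]
  simp [ContinuousLinearMap.sum_apply]
  refine Finset.sum_congr rfl fun α _ => Finset.sum_congr rfl fun β _ => ?_
  ring

lemma hasFDerivAt_lin (n : ℕ) (A : Fin (4*n) → ℝ) (p : (Fin (4*n) → ℝ) × (Fin 3 → ℝ)) :
    HasFDerivAt (fun q : (Fin (4*n) → ℝ) × (Fin 3 → ℝ) => ∑ β, A β * q.1 β)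
      (∑ β, A β • P1 n β) p := by
  apply HasFDerivAt.fun_sum; intro β _
  exact (P1_hasFDerivAt n β p).const_mul (A β)

lemma fderiv_lin_apply (n : ℕ) (A : Fin (4*n) → ℝ) (p u : (Fin (4*n) → ℝ) × (Fin 3 → ℝ)) :
    fderiv ℝ (fun q : (Fin (4*n) → ℝ) × (Fin 3 → ℝ) => ∑ β, A β * q.1 β) p u
    = ∑ β, A β * u.1 β := by
  rw [(hasFDerivAt_lin n A p).fderiv]
  simp [ContinuousLinearMap.sum_apply]

/-- `X_α = ∂_α + 2 (I_i)_{βα} x^β ∂_{t^i}` as a directional derivative. -/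
noncomputable def Xop (n : ℕ) (I : Fin 3 → Fin (4 * n) → Fin (4 * n) → ℝ)
    (α : Fin (4 * n)) (v : (Fin (4 * n) → ℝ) × (Fin 3 → ℝ) → ℝ) :
    (Fin (4 * n) → ℝ) × (Fin 3 → ℝ) → ℝ :=
  fun p => fderiv ℝ v p (Pi.single α 1, fun i => 2 * ∑ β, I i β α * p.1 β)


lemma Xop_poly (n : ℕ) (I : Fin 3 → Fin (4 * n) → Fin (4 * n) → ℝ)
    (γ : Fin (4 * n)) (c : Fin (4*n) → Fin (4*n) → ℝ) (d : Fin 3 → ℝ) :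
    Xop n I γ (fun q => (∑ α, ∑ β, c α β * q.1 α * q.1 β) + ∑ i, d i * q.2 i)
    = fun p => ∑ β, (c γ β + c β γ + 2 * ∑ i, d i * I i β γ) * p.1 β := by
  funext p
  show fderiv ℝ _ p _ = _
  rw [fderiv_poly_apply]
  have h1 : (∑ α, ∑ β, c α β * ((Pi.single γ 1 : Fin (4*n) → ℝ) α * p.1 β
      + p.1 α * (Pi.single γ 1 : Fin (4*n) → ℝ) β))
      = (∑ β, c γ β * p.1 β) + ∑ β, c β γ * p.1 β := by
    have e1 : ∀ α β : Fin (4*n), c α β * ((Pi.single γ 1 : Fin (4*n) → ℝ) α * p.1 β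
        + p.1 α * (Pi.single γ 1 : Fin (4*n) → ℝ) β)
        = (if α = γ then c α β * p.1 β else 0) + (if β = γ then c α β * p.1 α else 0) := by
      intro α β
      by_cases hα : α = γ <;> by_cases hβ : β = γ <;> simp [Pi.single_apply, hα, hβ] <;> ring
    simp only [e1, Finset.sum_add_distrib]
    congr 1
    · rw [Finset.sum_comm]
      simp
    · simp
  have h2 : (∑ i, d i * (2 * ∑ β, I i β γ * p.1 β))
      = ∑ β, (2 * ∑ i, d i * I i β γ) * p.1 β := by
    simp only [Finset.mul_sum, Finset.sum_mul]
    rw [Finset.sum_comm]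
    refine Finset.sum_congr rfl fun β _ => Finset.sum_congr rfl fun i _ => by ring
  rw [h1, h2]
  simp only [add_mul, Finset.sum_add_distrib]

lemma Xop_lin (n : ℕ) (I : Fin 3 → Fin (4 * n) → Fin (4 * n) → ℝ)
    (γ : Fin (4 * n)) (A : Fin (4*n) → ℝ) :
    Xop n I γ (fun p => ∑ β, A β * p.1 β) = fun _ => A γ := by
  funext p
  show fderiv ℝ _ p _ = _
  rw [fderiv_lin_apply]
  simp [Pi.single_apply]

/-- `T_i = 2∂_{t^i}` as a directional derivative. -/
noncomputable def Tvf (n : ℕ) (i : Fin 3)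
    (v : (Fin (4 * n) → ℝ) × (Fin 3 → ℝ) → ℝ) :
    (Fin (4 * n) → ℝ) × (Fin 3 → ℝ) → ℝ :=
  fun p => fderiv ℝ v p (0, Pi.single i 2)


lemma Tvf_poly (n : ℕ) (i : Fin 3) (c : Fin (4*n) → Fin (4*n) → ℝ) (d : Fin 3 → ℝ) :
    Tvf n i (fun q => (∑ α, ∑ β, c α β * q.1 α * q.1 β) + ∑ j, d j * q.2 j)
    = fun _ => 2 * d i := by
  funext p
  show fderiv ℝ _ p _ = _
  rw [fderiv_poly_apply]
  simp [Pi.single_apply, mul_comm]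

/-- `L₂ = |x|² 𝓛₀ + t^i T_i − 2` where `𝓛₀ = −Σ_α X_α X_α`. -/
noncomputable def Ltwo (n : ℕ) (I : Fin 3 → Fin (4 * n) → Fin (4 * n) → ℝ)
    (v : (Fin (4 * n) → ℝ) × (Fin 3 → ℝ) → ℝ) :
    (Fin (4 * n) → ℝ) × (Fin 3 → ℝ) → ℝ :=
  fun p => (∑ α, p.1 α ^ 2) * (-(∑ γ, Xop n I γ (Xop n I γ v) p))
    + (∑ i, p.2 i * Tvf n i v p) - 2 * v p


lemma Ltwo_poly (n : ℕ) (I : Fin 3 → Fin (4 * n) → Fin (4 * n) → ℝ)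
    (hI : ∀ i α β, I i α β = -I i β α)
    (c : Fin (4*n) → Fin (4*n) → ℝ) (d : Fin 3 → ℝ)
    (p : (Fin (4 * n) → ℝ) × (Fin 3 → ℝ)) :
    Ltwo n I (fun q => (∑ α, ∑ β, c α β * q.1 α * q.1 β) + ∑ i, d i * q.2 i) p
    = -(2 * (∑ γ, c γ γ)) * (∑ α, p.1 α ^ 2)
      - 2 * (∑ α, ∑ β, c α β * p.1 α * p.1 β) := by
  have hzero : ∀ i γ, I i γ γ = 0 := fun i γ => by have := hI i γ γ; linarith
  have hX : ∀ γ, Xop n I γ (Xop n I γ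
      (fun q => (∑ α, ∑ β, c α β * q.1 α * q.1 β) + ∑ i, d i * q.2 i))
      = fun _ => 2 * c γ γ := by
    intro γ
    rw [Xop_poly, Xop_lin]
    funext q
    simp [hzero]
    ring
  unfold Ltwo
  simp only [hX, Tvf_poly]
  rw [show (∑ γ, 2 * c γ γ) = 2 * ∑ γ, c γ γ from (Finset.mul_sum _ _ _).symm,
    show (∑ i, p.2 i * (2 * d i)) = 2 * ∑ i, d i * p.2 i from by
      rw [Finset.mul_sum]; exact Finset.sum_congr rfl fun i _ => by ring]
  ring

lemma Ltwo_quad (n : ℕ) (I : Fin 3 → Fin (4 * n) → Fin (4 * n) → ℝ)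
    (hI : ∀ i α β, I i α β = -I i β α)
    (c : Fin (4*n) → Fin (4*n) → ℝ)
    (p : (Fin (4 * n) → ℝ) × (Fin 3 → ℝ)) :
    Ltwo n I (fun q => ∑ α, ∑ β, c α β * q.1 α * q.1 β) p
    = -(2 * (∑ γ, c γ γ)) * (∑ α, p.1 α ^ 2)
      - 2 * (∑ α, ∑ β, c α β * p.1 α * p.1 β) := by
  have e : (fun q : (Fin (4 * n) → ℝ) × (Fin 3 → ℝ) => ∑ α, ∑ β, c α β * q.1 α * q.1 β)
      = (fun q => (∑ α, ∑ β, c α β * q.1 α * q.1 β) + ∑ i, (0:ℝ) * q.2 i) := by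
    funext q; simp
  rw [e, Ltwo_poly n I hI c (fun _ => 0) p]

lemma evalQ_single (n : ℕ) (c : Fin (4*n) → Fin (4*n) → ℝ) (γ : Fin (4*n)) :
    (∑ α, ∑ β, c α β * (Pi.single γ 1 : Fin (4*n) → ℝ) α * (Pi.single γ 1 : Fin (4*n) → ℝ) β)
    = c γ γ := by
  simp [Pi.single_apply, mul_ite, ite_mul, Finset.sum_ite_eq', Finset.sum_ite_eq]

lemma evalS_single (n : ℕ) (γ : Fin (4*n)) :
    (∑ α, ((Pi.single γ 1 : Fin (4*n) → ℝ) α)^2) = 1 := by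
  simp [Pi.single_apply]

def wtwo (n : ℕ) (a b : Fin (4*n)) : Fin (4*n) → ℝ :=
  fun δ => (if δ = a then 1 else 0) + (if δ = b then 1 else 0)

lemma evalQ_two (n : ℕ) (c : Fin (4*n) → Fin (4*n) → ℝ) (a b : Fin (4*n)) :
    (∑ α, ∑ β, c α β * wtwo n a b α * wtwo n a b β)
    = c a a + c a b + c b a + c b b := by
  simp [wtwo, mul_add, add_mul, mul_ite, ite_mul, Finset.sum_add_distrib,
    Finset.sum_ite_eq', Finset.sum_ite_eq]
  ring

lemma evalS_two (n : ℕ) (a b : Fin (4*n)) (h : a ≠ b) :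
    (∑ α, (wtwo n a b α)^2) = 2 := by
  have e : ∀ α, (wtwo n a b α)^2
      = (if α = a then 1 else 0) + (if α = b then 1 else 0) := by
    intro α
    by_cases h1 : α = a <;> by_cases h2 : α = b <;>
      simp_all [wtwo] <;> norm_num
  simp [e, Finset.sum_add_distrib]
  norm_num

lemma evalQ_shift (n : ℕ) (c : Fin (4*n) → Fin (4*n) → ℝ) (k : ℝ) (x : Fin (4*n) → ℝ) :
    (∑ α, ∑ β, (-(c α β)/2 + if α = β then k else 0) * x α * x β)
    = -(∑ α, ∑ β, c α β * x α * x β)/2 + k * ∑ α, x α ^ 2 := by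
  simp only [add_mul, Finset.sum_add_distrib]
  congr 1
  · calc (∑ α, ∑ β, (-(c α β)/2) * x α * x β)
        = ∑ α, ∑ β, (-(1:ℝ)/2) * (c α β * x α * x β) :=
          Finset.sum_congr rfl fun α _ => Finset.sum_congr rfl fun β _ => by ring
      _ = (-(1:ℝ)/2) * ∑ α, ∑ β, c α β * x α * x β := by
          rw [Finset.mul_sum]
          exact Finset.sum_congr rfl fun α _ => (Finset.mul_sum _ _ _).symm
      _ = -(∑ α, ∑ β, c α β * x α * x β)/2 := by ring
  · have e : ∀ α β : Fin (4*n), (if α = β then k else 0) * x α * x β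
        = if α = β then k * x α * x β else 0 := by
      intro α β; by_cases h : α = β <;> simp [h]
    simp only [e, Finset.sum_ite_eq, Finset.mem_univ, if_true, Finset.mul_sum]
    exact Finset.sum_congr rfl fun α _ => by ring

/-- On quadratic parabolic-degree-2 polynomials (spanned by `x^α x^β` and `t^i`),
the operator `L₂ = |x|²𝓛₀ + t^i T_i − 2` has kernel exactly the span of
`t¹, t², t³`, and is invertible on the quadratics in `x` alone. -/
theorem stmt_15 (n : ℕ) (I : Fin 3 → Fin (4 * n) → Fin (4 * n) → ℝ)
    (hI : ∀ i α β, I i α β = -I i β α)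
    (hcomp : ∀ i j α γ, (∑ β, I i α β * I j β γ) =
      -((if i = j then (1 : ℝ) else 0) * (if α = γ then (1 : ℝ) else 0))
        + ∑ k, eps i j k * I k α γ) :
    (∀ (c : Fin (4 * n) → Fin (4 * n) → ℝ) (d : Fin 3 → ℝ),
      ((∀ p : (Fin (4 * n) → ℝ) × (Fin 3 → ℝ),
          Ltwo n I (fun q =>
            (∑ α, ∑ β, c α β * q.1 α * q.1 β) + ∑ i, d i * q.2 i) p = 0) ↔
        (∀ p : (Fin (4 * n) → ℝ) × (Fin 3 → ℝ),
          (∑ α, ∑ β, c α β * p.1 α * p.1 β) + ∑ i, d i * p.2 i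
            = ∑ i, d i * p.2 i))) ∧
    (∀ c : Fin (4 * n) → Fin (4 * n) → ℝ, (∀ α β, c α β = c β α) →
      ∃ c' : Fin (4 * n) → Fin (4 * n) → ℝ,
        (∀ α β, c' α β = c' β α) ∧
        (∀ p : (Fin (4 * n) → ℝ) × (Fin 3 → ℝ),
          Ltwo n I (fun q => ∑ α, ∑ β, c' α β * q.1 α * q.1 β) p
            = ∑ α, ∑ β, c α β * p.1 α * p.1 β) ∧
        (∀ c'' : Fin (4 * n) → Fin (4 * n) → ℝ, (∀ α β, c'' α β = c'' β α) →
          (∀ p : (Fin (4 * n) → ℝ) × (Fin 3 → ℝ),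
            Ltwo n I (fun q => ∑ α, ∑ β, c'' α β * q.1 α * q.1 β) p
              = ∑ α, ∑ β, c α β * p.1 α * p.1 β) →
          c'' = c')) := by
  have hcard : (Finset.univ : Finset (Fin (4*n))).card = 4*n := by
    simp
  constructor
  · intro c d
    constructor
    · intro h p
      have hdiag : ∀ γ : Fin (4*n), c γ γ = -(∑ δ, c δ δ) := by
        intro γ
        have h1 := h (Pi.single γ 1, 0)
        rw [Ltwo_poly n I hI] at h1
        simp only [evalQ_single, evalS_single] at h1
        linarith
      have hsum : (∑ γ, c γ γ) = (4*n : ℝ) * (-(∑ δ, c δ δ)) := by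
        calc (∑ γ, c γ γ) = ∑ _γ : Fin (4*n), (-(∑ δ, c δ δ)) :=
              Finset.sum_congr rfl fun γ _ => hdiag γ
          _ = (4*n : ℝ) * (-(∑ δ, c δ δ)) := by
              rw [Finset.sum_const, hcard, nsmul_eq_mul]; push_cast; ring
      have hT0 : (∑ γ, c γ γ) = 0 := by
        have h1 : (1 + 4*(n:ℝ)) * (∑ γ, c γ γ) = 0 := by linear_combination hsum
        have h2 : (1 + 4*(n:ℝ)) ≠ 0 := by positivity
        exact (mul_eq_zero.mp h1).resolve_left h2
      have h3 := h p
      rw [Ltwo_poly n I hI, hT0] at h3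
      linarith
    · intro h p
      have hQ : ∀ q : (Fin (4 * n) → ℝ) × (Fin 3 → ℝ),
          (∑ α, ∑ β, c α β * q.1 α * q.1 β) = 0 := fun q => by
        have := h q; linarith
      have hT0 : (∑ γ, c γ γ) = 0 := by
        calc (∑ γ, c γ γ) = ∑ γ : Fin (4*n), (0:ℝ) :=
              Finset.sum_congr rfl fun γ _ => by
                have := hQ (Pi.single γ 1, 0)
                simp only [evalQ_single] at this
                exact this
          _ = 0 := by simp
      rw [Ltwo_poly n I hI, hT0, hQ p]
      ring
  · intro c hsym
    obtain ⟨T, hTdef⟩ : ∃ T:ℝ, T = ∑ γ, c γ γ := ⟨_, rfl⟩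
    obtain ⟨k, hkdef⟩ : ∃ k:ℝ, k = T / (2*(4*(n:ℝ)+1)) := ⟨_, rfl⟩
    have hk : (2*(4*(n:ℝ)+1)) * k = T := by
      rw [hkdef]
      field_simp
    obtain ⟨c', hc'def⟩ : ∃ c' : Fin (4 * n) → Fin (4 * n) → ℝ,
        c' = fun α β => -(c α β)/2 + (if α = β then k else 0) := ⟨_, rfl⟩
    have hT' : (∑ γ, c' γ γ) = -(T)/2 + (4*n:ℝ)*k := by
      have e : ∀ γ : Fin (4*n), c' γ γ = -(c γ γ)/2 + k := by
        intro γ; rw [hc'def]; simp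
      calc (∑ γ, c' γ γ) = ∑ γ, (-(c γ γ)/2 + k) :=
            Finset.sum_congr rfl fun γ _ => e γ
        _ = -(T)/2 + (4*n:ℝ)*k := by
            rw [Finset.sum_add_distrib, Finset.sum_const, hcard, nsmul_eq_mul,
              ← Finset.sum_div, hTdef,
              show (∑ γ : Fin (4*n), (-(c γ γ))) = -(∑ γ : Fin (4*n), c γ γ) from by
                simp]
            push_cast; ring
    have hc'sym : ∀ α β, c' α β = c' β α := by
      intro α β
      rcases eq_or_ne α β with h|h
      · subst h; rfl
      · rw [hc'def]
        simp only [if_neg h, if_neg h.symm]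
        rw [hsym α β]
    have hmain : ∀ p : (Fin (4 * n) → ℝ) × (Fin 3 → ℝ),
        Ltwo n I (fun q => ∑ α, ∑ β, c' α β * q.1 α * q.1 β) p
          = ∑ α, ∑ β, c α β * p.1 α * p.1 β := by
      intro p
      rw [Ltwo_quad n I hI, hT']
      have hQ : (∑ α, ∑ β, c' α β * p.1 α * p.1 β)
          = -(∑ α, ∑ β, c α β * p.1 α * p.1 β)/2 + k * ∑ α, p.1 α ^ 2 := by
        rw [hc'def]; exact evalQ_shift n c k p.1
      rw [hQ]
      linear_combination (-(∑ α, p.1 α ^ 2)) * hk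
    refine ⟨c', hc'sym, hmain, ?_⟩
    intro c'' hsym'' h''
    have key : ∀ (e : Fin (4 * n) → Fin (4 * n) → ℝ),
        (∀ p : (Fin (4 * n) → ℝ) × (Fin 3 → ℝ),
          Ltwo n I (fun q => ∑ α, ∑ β, e α β * q.1 α * q.1 β) p
            = ∑ α, ∑ β, c α β * p.1 α * p.1 β) →
        ∀ p : (Fin (4 * n) → ℝ) × (Fin 3 → ℝ),
          -(2 * (∑ γ, e γ γ)) * (∑ α, p.1 α ^ 2)
            - 2 * (∑ α, ∑ β, e α β * p.1 α * p.1 β)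
          = ∑ α, ∑ β, c α β * p.1 α * p.1 β := by
      intro e he p
      rw [← Ltwo_quad n I hI]
      exact he p
    have k1 := key c'' h''
    have k2 := key c' hmain
    have e1 : ∀ γ : Fin (4*n),
        (∑ δ, c'' δ δ) + c'' γ γ = (∑ δ, c' δ δ) + c' γ γ := by
      intro γ
      have a1 := k1 (Pi.single γ 1, 0)
      have a2 := k2 (Pi.single γ 1, 0)
      simp only [evalQ_single, evalS_single] at a1 a2
      linarith
    have eT : (∑ δ, c'' δ δ) = (∑ δ, c' δ δ) := by
      have hs : (∑ γ : Fin (4*n), ((∑ δ, c'' δ δ) + c'' γ γ))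
          = ∑ γ : Fin (4*n), ((∑ δ, c' δ δ) + c' γ γ) :=
        Finset.sum_congr rfl fun γ _ => e1 γ
      rw [Finset.sum_add_distrib, Finset.sum_add_distrib, Finset.sum_const,
        Finset.sum_const, hcard] at hs
      simp only [nsmul_eq_mul] at hs
      have h1 : (1 + (4*n:ℝ)) * (∑ δ, c'' δ δ) = (1 + (4*n:ℝ)) * (∑ δ, c' δ δ) := by
        push_cast at hs ⊢
        linear_combination hs
      have h2 : (1 + (4*n:ℝ)) ≠ 0 := by positivity
      exact mul_left_cancel₀ h2 h1
    have ediag : ∀ γ, c'' γ γ = c' γ γ := by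
      intro γ
      have := e1 γ
      rw [eT] at this
      linarith
    funext α β
    rcases eq_or_ne α β with h|h
    · subst h; exact ediag α
    · have a1 := k1 (wtwo n α β, 0)
      have a2 := k2 (wtwo n α β, 0)
      simp only [evalQ_two, evalS_two n α β h] at a1 a2
      have h1 := hsym'' α β
      have h2 := hc'sym α β
      have h3 := ediag α
      have h4 := ediag β
      have h5 : (∑ δ, c'' δ δ) = (∑ δ, c' δ δ) := eT
      linarith
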